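/- Let D u = Σ_{j=0}^n λ_j(x) e_j ∂_j u be a generalized Cauchy–Riemann operator on Ω ⊆ ℝ^{n+1} with real-valued C¹ coefficients λ_j, λ_0 ≠ 0, β_i := λ_i/λ_0, and let F u = Σ_{i=0}^n A^{(i)}(x) ∂_i u where each A^{(i)} is a real-valued C¹ function. If for every i = 1, …, n the condition D A^{(i)}(x) − D A^{(0)}(x) β_i(x) e_i − Σ_{j=0}^n A^{(j)}(x) λ_0(x) ∂_j β_i(x) e_i = 0 holds on Ω, then for every C² function u : Ω → A_n(2, α_j, γ_ij) with Du = 0 one has D(F u) = 0; that is, (F, D) is an associated pair. -/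

import Mathlib

open scoped BigOperators

/-- Partial derivative in the `k`-th coordinate direction. -/
noncomputable def pd {m : ℕ} {F : Type*} [NormedAddCommGroup F] [NormedSpace ℝ F]
    (k : Fin m) (u : (Fin m → ℝ) → F) (x : Fin m → ℝ) : F :=
  fderiv ℝ u x (Pi.single k 1)

/-- The generalized Cauchy–Riemann operator `Du = Σⱼ λⱼ(x) eⱼ ∂ⱼu` (with `e₀ = 1`). -/
noncomputable def Dop {n : ℕ} {A : Type*} [NormedRing A] [NormedAlgebra ℝ A]
    (lam : Fin (n + 1) → (Fin (n + 1) → ℝ) → ℝ) (e : Fin (n + 1) → A)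
    (u : (Fin (n + 1) → ℝ) → A) (x : Fin (n + 1) → ℝ) : A :=
  ∑ j, lam j x • (e j * pd j u x)

/-- `D` applied to a real-valued function `a`: the algebra-valued function
`Σⱼ λⱼ(x) ∂ⱼa(x) eⱼ`. -/
noncomputable def DopR {n : ℕ} {A : Type*} [NormedRing A] [NormedAlgebra ℝ A]
    (lam : Fin (n + 1) → (Fin (n + 1) → ℝ) → ℝ) (e : Fin (n + 1) → A)
    (a : (Fin (n + 1) → ℝ) → ℝ) (x : Fin (n + 1) → ℝ) : A :=
  ∑ j, (lam j x * pd j a x) • e j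

lemma pd_congr_nhds {m : ℕ} {F : Type*} [NormedAddCommGroup F] [NormedSpace ℝ F]
    {u v : (Fin m → ℝ) → F} {x : Fin m → ℝ} (h : u =ᶠ[nhds x] v) (k : Fin m) :
    pd k u x = pd k v x := by
  unfold pd; rw [h.fderiv_eq]

lemma pd_smul {m : ℕ} {F : Type*} [NormedAddCommGroup F] [NormedSpace ℝ F]
    {c : (Fin m → ℝ) → ℝ} {f : (Fin m → ℝ) → F} {x : Fin m → ℝ}
    (hc : DifferentiableAt ℝ c x) (hf : DifferentiableAt ℝ f x) (k : Fin m) :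
    pd k (fun y => c y • f y) x = c x • pd k f x + pd k c x • f x := by
  unfold pd; rw [fderiv_fun_smul hc hf]; simp

lemma pd_mul {m : ℕ} {c d : (Fin m → ℝ) → ℝ} {x : Fin m → ℝ}
    (hc : DifferentiableAt ℝ c x) (hd : DifferentiableAt ℝ d x) (k : Fin m) :
    pd k (fun y => c y * d y) x = c x * pd k d x + pd k c x * d x := by
  unfold pd; rw [fderiv_fun_mul hc hd]; simp [mul_comm]

lemma pd_const_mul {m : ℕ} {A : Type*} [NormedRing A] [NormedAlgebra ℝ A]
    {f : (Fin m → ℝ) → A} {x : Fin m → ℝ}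
    (hf : DifferentiableAt ℝ f x) (b : A) (k : Fin m) :
    pd k (fun y => b * f y) x = b * pd k f x := by
  unfold pd; rw [fderiv_const_mul hf b]; simp

lemma pd_sum {m : ℕ} {F : Type*} [NormedAddCommGroup F] [NormedSpace ℝ F]
    {ι : Type*} (s : Finset ι) (f : ι → (Fin m → ℝ) → F) {x : Fin m → ℝ}
    (h : ∀ i ∈ s, DifferentiableAt ℝ (f i) x) (k : Fin m) :
    pd k (fun y => ∑ i ∈ s, f i y) x = ∑ i ∈ s, pd k (f i) x := by
  unfold pd; rw [fderiv_fun_sum h]; simp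

lemma pd_differentiableAt {m : ℕ} {F : Type*} [NormedAddCommGroup F] [NormedSpace ℝ F]
    {u : (Fin m → ℝ) → F} {x : Fin m → ℝ} (hu : ContDiffAt ℝ 2 u x) (j : Fin m) :
    DifferentiableAt ℝ (pd j u) x := by
  have hD' : DifferentiableAt ℝ (fderiv ℝ u) x :=
    (hu.fderiv_right (m := 1) le_rfl).differentiableAt one_ne_zero
  unfold pd
  exact hD'.clm_apply (differentiableAt_const _)

lemma pd_pd_symm {m : ℕ} {F : Type*} [NormedAddCommGroup F] [NormedSpace ℝ F]
    {u : (Fin m → ℝ) → F} {x : Fin m → ℝ} (hu : ContDiffAt ℝ 2 u x) (i j : Fin m) :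
    pd i (pd j u) x = pd j (pd i u) x := by
  have hD' : DifferentiableAt ℝ (fderiv ℝ u) x :=
    (hu.fderiv_right (m := 1) le_rfl).differentiableAt one_ne_zero
  have key : ∀ i j : Fin m,
      pd i (pd j u) x = fderiv ℝ (fderiv ℝ u) x (Pi.single i 1) (Pi.single j 1) := by
    intro i j
    unfold pd
    rw [fderiv_clm_apply hD' (differentiableAt_const _)]
    simp
  rw [key i j, key j i, (hu.isSymmSndFDerivAt (by simp)).eq]

/-- If the real-valued C¹ coefficients `A⁽ⁱ⁾` of `Fu = Σᵢ A⁽ⁱ⁾(x)∂ᵢu` satisfy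
`DA⁽ⁱ⁾ - DA⁽⁰⁾ βᵢ eᵢ - Σⱼ A⁽ʲ⁾ λ₀ ∂ⱼβᵢ eᵢ = 0` on `Ω` for all `i = 1, …, n`,
then `(F, D)` is an associated pair: `Du = 0` implies `D(Fu) = 0`. -/
theorem associated_of_real_coeff_conditions {n : ℕ} {A : Type*}
    [NormedRing A] [NormedAlgebra ℝ A] [FiniteDimensional ℝ A]
    (α : Fin (n + 1) → ℝ) (γ : Fin (n + 1) → Fin (n + 1) → ℝ)
    (e : Fin (n + 1) → A) (he0 : e 0 = 1)
    (hsq : ∀ j, j ≠ 0 → e j * e j = algebraMap ℝ A (-(α j)))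
    (hanti : ∀ i j, i ≠ 0 → j ≠ 0 → i ≠ j →
      e i * e j + e j * e i = algebraMap ℝ A (2 * γ i j))
    (lam : Fin (n + 1) → (Fin (n + 1) → ℝ) → ℝ)
    (hlam : ∀ j, ContDiff ℝ 1 (lam j))
    (Ω : Set (Fin (n + 1) → ℝ)) (hΩ : IsOpen Ω)
    (hlam0 : ∀ x ∈ Ω, lam 0 x ≠ 0)
    (Aco : Fin (n + 1) → (Fin (n + 1) → ℝ) → ℝ)
    (hAco : ∀ i, ContDiff ℝ 1 (Aco i))
    (hcond : ∀ i : Fin (n + 1), i ≠ 0 → ∀ x ∈ Ω,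
      DopR lam e (Aco i) x
        - (lam i x / lam 0 x) • (DopR lam e (Aco 0) x * e i)
        - (∑ j, (Aco j x * lam 0 x * pd j (fun y => lam i y / lam 0 y) x) • e i) = 0) :
    ∀ u : (Fin (n + 1) → ℝ) → A, ContDiffOn ℝ 2 u Ω →
      (∀ x ∈ Ω, Dop lam e u x = 0) →
      ∀ x ∈ Ω, Dop lam e (fun y => ∑ i, Aco i y • pd i u y) x = 0 := by
  intro u hu hDu x hx
  classical
  have hxΩ : Ω ∈ nhds x := hΩ.mem_nhds hx
  have hu2 : ContDiffAt ℝ 2 u x := (hu x hx).contDiffAt hxΩ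
  have hd1 : ∀ j, DifferentiableAt ℝ (pd j u) x := fun j => pd_differentiableAt hu2 j
  have hlamd : ∀ j, DifferentiableAt ℝ (lam j) x := fun j => (hlam j).differentiable one_ne_zero x
  have hAd : ∀ i, DifferentiableAt ℝ (Aco i) x := fun i => (hAco i).differentiable one_ne_zero x
  have hlam0x : lam 0 x ≠ 0 := hlam0 x hx
  -- derivative of Fu in direction k
  have step1 : ∀ k, pd k (fun y => ∑ i, Aco i y • pd i u y) x
      = ∑ i, (Aco i x • pd k (pd i u) x + pd k (Aco i) x • pd i u x) := by
    intro k
    rw [pd_sum Finset.univ (fun i y => Aco i y • pd i u y)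
      (fun i _ => (hAd i).smul (hd1 i)) k]
    exact Finset.sum_congr rfl fun i _ => pd_smul (hAd i) (hd1 i) k
  -- differentiating Du = 0
  have star : ∀ k, ∑ j, lam j x • (e j * pd k (pd j u) x)
      = - ∑ j, pd k (lam j) x • (e j * pd j u x) := by
    intro k
    have h0 : pd k (Dop lam e u) x = 0 := by
      have hev : Dop lam e u =ᶠ[nhds x] fun _ => (0 : A) := by
        filter_upwards [hxΩ] with y hy using hDu y hy
      rw [pd_congr_nhds hev k]
      unfold pd; simp
    have h1 : pd k (Dop lam e u) x
        = ∑ j, (lam j x • (e j * pd k (pd j u) x) + pd k (lam j) x • (e j * pd j u x)) := by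
      show pd k (fun y => ∑ j, lam j y • (e j * pd j u y)) x = _
      rw [pd_sum Finset.univ (fun j y => lam j y • (e j * pd j u y))
        (fun j _ => (hlamd j).smul ((hd1 j).const_mul (e j))) k]
      refine Finset.sum_congr rfl fun j _ => ?_
      rw [pd_smul (hlamd j) ((hd1 j).const_mul (e j)) k, pd_const_mul (hd1 j) (e j) k]
    rw [h1, Finset.sum_add_distrib] at h0
    exact eq_neg_of_add_eq_zero_left h0
  -- the main reduction : D(Fu)(x) = Σ_i M_i * ∂_i u (x)
  have main : Dop lam e (fun y => ∑ i, Aco i y • pd i u y) x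
      = ∑ i, (DopR lam e (Aco i) x - (∑ j, Aco j x * pd j (lam i) x) • e i) * pd i u x := by
    show (∑ k, lam k x • (e k * pd k (fun y => ∑ i, Aco i y • pd i u y) x)) = _
    calc (∑ k, lam k x • (e k * pd k (fun y => ∑ i, Aco i y • pd i u y) x))
        = ∑ k, ∑ i, (lam k x • (Aco i x • (e k * pd k (pd i u) x))
            + lam k x • (pd k (Aco i) x • (e k * pd i u x))) := by
          refine Finset.sum_congr rfl fun k _ => ?_
          rw [step1 k, Finset.mul_sum, Finset.smul_sum]
          refine Finset.sum_congr rfl fun i _ => ?_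
          rw [mul_add, smul_add, mul_smul_comm, mul_smul_comm]
      _ = ∑ i, (∑ k, lam k x • (Aco i x • (e k * pd k (pd i u) x))
            + ∑ k, lam k x • (pd k (Aco i) x • (e k * pd i u x))) := by
          rw [Finset.sum_comm]
          exact Finset.sum_congr rfl fun i _ => Finset.sum_add_distrib
      _ = ∑ i, ((- ∑ k, (Aco i x * pd i (lam k) x) • (e k * pd k u x))
            + DopR lam e (Aco i) x * pd i u x) := by
          refine Finset.sum_congr rfl fun i _ => ?_
          congr 1
          · calc ∑ k, lam k x • (Aco i x • (e k * pd k (pd i u) x))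
                = Aco i x • ∑ k, lam k x • (e k * pd i (pd k u) x) := by
                  rw [Finset.smul_sum]
                  refine Finset.sum_congr rfl fun k _ => ?_
                  rw [pd_pd_symm hu2 k i, smul_comm]
              _ = Aco i x • (- ∑ k, pd i (lam k) x • (e k * pd k u x)) := by rw [star i]
              _ = - ∑ k, (Aco i x * pd i (lam k) x) • (e k * pd k u x) := by
                  rw [smul_neg, Finset.smul_sum]
                  congr 1
                  exact Finset.sum_congr rfl fun k _ => (smul_smul _ _ _)
          · show (∑ k, lam k x • (pd k (Aco i) x • (e k * pd i u x)))
                = DopR lam e (Aco i) x * pd i u x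
            unfold DopR
            rw [Finset.sum_mul]
            refine Finset.sum_congr rfl fun k _ => ?_
            rw [smul_mul_assoc, smul_smul]
      _ = (∑ i, DopR lam e (Aco i) x * pd i u x)
            - ∑ i, (∑ j, Aco j x * pd j (lam i) x) • (e i * pd i u x) := by
          rw [Finset.sum_add_distrib, Finset.sum_neg_distrib]
          have hcomm : (∑ i, ∑ k, (Aco i x * pd i (lam k) x) • (e k * pd k u x))
              = ∑ i, (∑ j, Aco j x * pd j (lam i) x) • (e i * pd i u x) := by
            rw [Finset.sum_comm]
            exact Finset.sum_congr rfl fun i _ => (Finset.sum_smul).symm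
          rw [hcomm, neg_add_eq_sub]
      _ = ∑ i, (DopR lam e (Aco i) x - (∑ j, Aco j x * pd j (lam i) x) • e i) * pd i u x := by
          rw [← Finset.sum_sub_distrib]
          refine Finset.sum_congr rfl fun i _ => ?_
          rw [sub_mul, smul_mul_assoc]
  rw [main]
  -- quotient rule
  have hquot : ∀ i j : Fin (n + 1), lam 0 x * pd j (fun y => lam i y / lam 0 y) x
      = pd j (lam i) x - lam i x / lam 0 x * pd j (lam 0) x := by
    intro i j
    have hb : DifferentiableAt ℝ (fun y => lam i y / lam 0 y) x := by
      simp only [div_eq_mul_inv]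
      exact (hlamd i).mul ((hlamd 0).inv hlam0x)
    have hev : lam i =ᶠ[nhds x] fun y => (lam i y / lam 0 y) * lam 0 y := by
      filter_upwards [hxΩ] with y hy
      rw [div_mul_cancel₀ _ (hlam0 y hy)]
    have h := pd_congr_nhds hev j
    rw [pd_mul hb (hlamd 0) j] at h
    linarith [h]
  -- the condition gives M_i = β_i • (M_0 * e_i)
  have hM : ∀ i : Fin (n + 1), i ≠ 0 →
      DopR lam e (Aco i) x - (∑ j, Aco j x * pd j (lam i) x) • e i
      = (lam i x / lam 0 x) •
        ((DopR lam e (Aco 0) x - (∑ j, Aco j x * pd j (lam 0) x) • e 0) * e i) := by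
    intro i hi
    have hc := hcond i hi x hx
    have hs : (∑ j, (Aco j x * lam 0 x * pd j (fun y => lam i y / lam 0 y) x) • e i)
        = ((∑ j, Aco j x * pd j (lam i) x)
            - lam i x / lam 0 x * ∑ j, Aco j x * pd j (lam 0) x) • e i := by
      rw [← Finset.sum_smul]
      congr 1
      rw [Finset.mul_sum, ← Finset.sum_sub_distrib]
      refine Finset.sum_congr rfl fun j _ => ?_
      rw [mul_assoc, hquot i j]
      ring
    rw [hs, sub_sub, sub_eq_zero] at hc
    rw [hc, he0, sub_mul, smul_mul_assoc, one_mul]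
    module
  -- split off the i = 0 term and use Du(x) = 0
  rw [← Finset.add_sum_erase Finset.univ _ (Finset.mem_univ (0 : Fin (n + 1)))]
  have hsum2 : (∑ i ∈ Finset.univ.erase (0 : Fin (n + 1)),
      (DopR lam e (Aco i) x - (∑ j, Aco j x * pd j (lam i) x) • e i) * pd i u x)
      = ∑ i ∈ Finset.univ.erase (0 : Fin (n + 1)),
        ((lam i x / lam 0 x) •
          ((DopR lam e (Aco 0) x - (∑ j, Aco j x * pd j (lam 0) x) • e 0) * e i)) * pd i u x :=
    Finset.sum_congr rfl fun i hi => by rw [hM i (Finset.mem_erase.mp hi).1]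
  rw [hsum2]
  set M0 : A := DopR lam e (Aco 0) x - (∑ j, Aco j x * pd j (lam 0) x) • e 0 with hM0
  have hP0 : lam 0 x • pd 0 u x
      = - ∑ i ∈ Finset.univ.erase (0 : Fin (n + 1)), lam i x • (e i * pd i u x) := by
    have h := hDu x hx
    unfold Dop at h
    rw [← Finset.add_sum_erase Finset.univ _ (Finset.mem_univ (0 : Fin (n + 1))),
      he0, one_mul] at h
    exact eq_neg_of_add_eq_zero_left h
  have key : lam 0 x • (M0 * pd 0 u x
      + ∑ i ∈ Finset.univ.erase (0 : Fin (n + 1)),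
          ((lam i x / lam 0 x) • (M0 * e i)) * pd i u x) = 0 := by
    rw [smul_add, Finset.smul_sum]
    have h2 : ∀ i ∈ Finset.univ.erase (0 : Fin (n + 1)),
        lam 0 x • (((lam i x / lam 0 x) • (M0 * e i)) * pd i u x)
        = lam i x • (M0 * (e i * pd i u x)) := by
      intro i _
      rw [smul_mul_assoc, smul_smul, mul_comm (lam 0 x), div_mul_cancel₀ _ hlam0x, mul_assoc]
    rw [Finset.sum_congr rfl h2, ← mul_smul_comm, hP0, mul_neg, Finset.mul_sum]
    have h3 : (∑ i ∈ Finset.univ.erase (0 : Fin (n + 1)), M0 * (lam i x • (e i * pd i u x)))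
        = ∑ i ∈ Finset.univ.erase (0 : Fin (n + 1)), lam i x • (M0 * (e i * pd i u x)) :=
      Finset.sum_congr rfl fun i _ => mul_smul_comm _ _ _
    rw [h3, neg_add_cancel]
  exact (smul_eq_zero.mp key).resolve_left hlam0x
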